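/- arXiv:1201.1172 — 4 statements merged into one kernel-verified Lean document; each statement's English description precedes it below -/
import Mathlib

section
/- For density operators ρ and σ on a finite-dimensional Hilbert space, the trace distance D(ρ,σ) = ‖ρ−σ‖₁ and fidelity F(ρ,σ) = Tr √(ρ^{1/2} σ ρ^{1/2}) satisfy 2(1 − F(ρ,σ)) ≤ D(ρ,σ) ≤ 2√(1 − F(ρ,σ)²). -/
open Matrix
open scoped Matrix ComplexOrder

noncomputable section

set_option linter.unusedSectionVars false

/-- The positive semidefinite square root of a positive semidefinite matrix
(the definition removed from Mathlib, restated verbatim). -/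
def Matrix.PosSemidef.sqrt {n : Type*} [Fintype n] [DecidableEq n] {𝕜 : Type*} [RCLike 𝕜]
    {A : Matrix n n 𝕜} (hA : A.PosSemidef) : Matrix n n 𝕜 :=
  hA.1.eigenvectorUnitary.1 * diagonal ((↑) ∘ (√·) ∘ hA.1.eigenvalues) *
  (star hA.1.eigenvectorUnitary : Matrix n n 𝕜)

/-- The trace norm `‖M‖₁ = Tr √(MᴴM)` of a complex matrix. -/
def traceNorm {n : Type*} [Fintype n] [DecidableEq n] (M : Matrix n n ℂ) : ℝ :=
  ((Matrix.posSemidef_conjTranspose_mul_self M).sqrt).trace.re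

open scoped MatrixOrder in
lemma Matrix.PosSemidef.sqrt_eq_cfcSqrt {n : Type*} [Fintype n] [DecidableEq n]
    {A : Matrix n n ℂ} (hA : A.PosSemidef) : hA.sqrt = CFC.sqrt A := by
  have := hA.nonneg
  rw [CFC.sqrt_eq_cfc, cfc_nnreal_eq_real _ A, hA.1.cfc_eq]
  simp only [IsHermitian.cfc, Unitary.conjStarAlgAut_apply, Matrix.PosSemidef.sqrt]
  congr 3
  funext i
  simp [Real.coe_sqrt, Real.coe_toNNReal', hA.eigenvalues_nonneg i]

open scoped MatrixOrder in
lemma Matrix.PosSemidef.posSemidef_sqrt {n : Type*} [Fintype n] [DecidableEq n]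
    {A : Matrix n n ℂ} (hA : A.PosSemidef) : hA.sqrt.PosSemidef := by
  rw [hA.sqrt_eq_cfcSqrt]
  exact (CFC.sqrt_nonneg A).posSemidef

open scoped MatrixOrder in
lemma Matrix.PosSemidef.sqrt_mul_self {n : Type*} [Fintype n] [DecidableEq n]
    {A : Matrix n n ℂ} (hA : A.PosSemidef) : hA.sqrt * hA.sqrt = A := by
  rw [hA.sqrt_eq_cfcSqrt]
  exact CFC.sqrt_mul_sqrt_self A hA.nonneg

open scoped MatrixOrder in
lemma Matrix.PosSemidef.eq_sqrt_of_sq_eq {n : Type*} [Fintype n] [DecidableEq n]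
    {A X : Matrix n n ℂ} (hX : X.PosSemidef) (hA : A.PosSemidef) (h : X ^ 2 = A) :
    X = hA.sqrt := by
  rw [hA.sqrt_eq_cfcSqrt]
  exact (CFC.sqrt_unique (by rw [← pow_two, h]) hX.nonneg).symm

namespace FvG

variable {n : Type*} [Fintype n] [DecidableEq n]

/-- Functional calculus of a Hermitian complex matrix. -/
def fcal {A : Matrix n n ℂ} (hA : A.IsHermitian) (f : ℝ → ℝ) : Matrix n n ℂ :=
  (hA.eigenvectorUnitary : Matrix n n ℂ) * diagonal ((↑) ∘ f ∘ hA.eigenvalues)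
    * (star hA.eigenvectorUnitary : Matrix n n ℂ)

variable {A : Matrix n n ℂ} (hA : A.IsHermitian) (f g : ℝ → ℝ)

lemma fcal_mul : fcal hA f * fcal hA g = fcal hA (fun x => f x * g x) := by
  unfold fcal
  have h1 : (star hA.eigenvectorUnitary : Matrix n n ℂ) * (hA.eigenvectorUnitary : Matrix n n ℂ) = 1 :=
    Unitary.star_mul_self_of_mem (SetLike.coe_mem _)
  calc (hA.eigenvectorUnitary : Matrix n n ℂ) * diagonal ((↑) ∘ f ∘ hA.eigenvalues)
        * (star hA.eigenvectorUnitary : Matrix n n ℂ) *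
        ((hA.eigenvectorUnitary : Matrix n n ℂ) * diagonal ((↑) ∘ g ∘ hA.eigenvalues)
        * (star hA.eigenvectorUnitary : Matrix n n ℂ))
      = (hA.eigenvectorUnitary : Matrix n n ℂ) * (diagonal ((↑) ∘ f ∘ hA.eigenvalues)
        * ((star hA.eigenvectorUnitary : Matrix n n ℂ) * (hA.eigenvectorUnitary : Matrix n n ℂ))
        * diagonal ((↑) ∘ g ∘ hA.eigenvalues)) * (star hA.eigenvectorUnitary : Matrix n n ℂ) := by
        simp only [mul_assoc]
    _ = _ := by
        rw [h1, mul_one, diagonal_mul_diagonal]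
        congr 2
        ext i j
        simp [Matrix.diagonal, Function.comp]

lemma fcal_one : fcal hA (fun _ => 1) = 1 := by
  unfold fcal
  have : ((↑) ∘ (fun _ : ℝ => (1:ℝ)) ∘ hA.eigenvalues : n → ℂ) = fun _ => 1 := by
    funext i; simp
  rw [this, diagonal_one, mul_one]
  exact Unitary.mul_star_self_of_mem (SetLike.coe_mem _)

lemma fcal_id : fcal hA id = A := by
  rw [fcal]
  exact hA.spectral_theorem.symm

lemma fcal_congr (h : ∀ i, f (hA.eigenvalues i) = g (hA.eigenvalues i)) :
    fcal hA f = fcal hA g := by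
  unfold fcal
  have : ((↑) ∘ f ∘ hA.eigenvalues : n → ℂ) = (↑) ∘ g ∘ hA.eigenvalues := by
    funext i
    simp only [Function.comp_apply, h i]
  rw [this]

lemma fcal_conjTranspose : (fcal hA f)ᴴ = fcal hA f := by
  unfold fcal
  simp only [conjTranspose_mul, conjTranspose_conjTranspose, diagonal_conjTranspose]
  have h1 : (star (hA.eigenvectorUnitary : Matrix n n ℂ))ᴴ = (hA.eigenvectorUnitary : Matrix n n ℂ) := by
    rw [← Matrix.star_eq_conjTranspose, star_star]
  have h2 : star ((↑) ∘ f ∘ hA.eigenvalues : n → ℂ) = (↑) ∘ f ∘ hA.eigenvalues := by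
    funext i; simp [Function.comp]
  rw [h1, h2, mul_assoc, Matrix.star_eq_conjTranspose]

lemma fcal_isHermitian : (fcal hA f).IsHermitian := fcal_conjTranspose hA f

lemma fcal_posSemidef (hf : ∀ x, 0 ≤ f x) : (fcal hA f).PosSemidef := by
  unfold fcal
  have hd : PosSemidef (diagonal ((↑) ∘ f ∘ hA.eigenvalues : n → ℂ)) := by
    refine posSemidef_diagonal_iff.mpr fun i => ?_
    rw [Function.comp_apply, Function.comp_apply]
    exact_mod_cast Complex.zero_le_real.mpr (hf _)
  have := hd.mul_mul_conjTranspose_same (hA.eigenvectorUnitary : Matrix n n ℂ)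
  rwa [← Matrix.star_eq_conjTranspose] at this

lemma fcal_trace : (fcal hA f).trace = ∑ i, (f (hA.eigenvalues i) : ℂ) := by
  unfold fcal
  rw [trace_mul_cycle,
    Unitary.star_mul_self_of_mem (SetLike.coe_mem _), one_mul, trace_diagonal]
  simp

lemma trace_re_sum (v : n → ℂ) : (∑ i, v i).re = ∑ i, (v i).re := by
  simp [Complex.re_sum]

lemma fcal_trace_re : ((fcal hA f).trace).re = ∑ i, f (hA.eigenvalues i) := by
  rw [fcal_trace, trace_re_sum]
  simp

lemma sqrt_eq_fcal {A : Matrix n n ℂ} (hA : A.PosSemidef) :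
    hA.sqrt = fcal hA.1 Real.sqrt := rfl

lemma sqrt_eq_of_mul_self {A X : Matrix n n ℂ} (hA : A.PosSemidef) (hX : X.PosSemidef)
    (h : X * X = A) : hA.sqrt = X :=
  (hX.eq_sqrt_of_sq_eq hA (by rw [pow_two, h])).symm

lemma psd_trace_re_nonneg {A : Matrix n n ℂ} (hA : A.PosSemidef) : 0 ≤ A.trace.re := by
  have h : A.trace = (fcal hA.1 id).trace := by rw [fcal_id]
  rw [h, fcal_trace, trace_re_sum]
  refine Finset.sum_nonneg fun i _ => ?_
  simpa using hA.eigenvalues_nonneg i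

/-- trace of a product of two psd matrices has nonneg real part -/
lemma trace_mul_psd_nonneg {A B : Matrix n n ℂ} (hA : A.PosSemidef) (hB : B.PosSemidef) :
    0 ≤ (A * B).trace.re := by
  have h1 : A * B = hA.sqrt * (hA.sqrt * B) := by
    rw [← mul_assoc, hA.sqrt_mul_self]
  have h2 : (A * B).trace = (hA.sqrt * B * hA.sqrt).trace := by
    rw [h1, trace_mul_comm, mul_assoc]
  rw [h2]
  refine psd_trace_re_nonneg ?_
  have := hB.mul_mul_conjTranspose_same hA.sqrt
  rwa [hA.posSemidef_sqrt.1.eq] at this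

lemma traceNorm_eq_sqrt_trace_re (M : Matrix n n ℂ) :
    traceNorm M = ((posSemidef_conjTranspose_mul_self M).sqrt).trace.re := rfl

/-- trace norm of a Hermitian matrix is the sum of the absolute values of eigenvalues -/
lemma traceNorm_hermitian {Δ : Matrix n n ℂ} (hΔ : Δ.IsHermitian) :
    traceNorm Δ = ∑ i, |hΔ.eigenvalues i| := by
  have hXpsd : (fcal hΔ (fun x => |x|)).PosSemidef := fcal_posSemidef hΔ _ fun x => abs_nonneg x
  have hmul : fcal hΔ (fun x => |x|) * fcal hΔ (fun x => |x|) = Δᴴ * Δ := by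
    rw [fcal_mul]
    have : (fun x : ℝ => |x| * |x|) = fun x => id x * id x := by
      funext x; simp [abs_mul_abs_self]
    rw [this, ← fcal_mul, fcal_id, hΔ.eq]
  rw [traceNorm_eq_sqrt_trace_re,
    sqrt_eq_of_mul_self (posSemidef_conjTranspose_mul_self Δ) hXpsd hmul, fcal_trace_re]

lemma trace_conjTranspose_mul_self_re (A : Matrix n n ℂ) :
    (Aᴴ * A).trace.re = ∑ p : n × n, Complex.normSq (A p.1 p.2) := by
  rw [Matrix.trace]
  simp only [Matrix.diag_apply, Matrix.mul_apply, Matrix.conjTranspose_apply]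
  rw [trace_re_sum]
  rw [Fintype.sum_prod_type]
  rw [Finset.sum_comm]
  congr 1; funext i
  rw [trace_re_sum]
  congr 1; funext j
  simp [Complex.normSq_apply, Complex.mul_re]

/-- Cauchy-Schwarz for the Frobenius inner product. -/
lemma abs_trace_conjTranspose_mul_le (A B : Matrix n n ℂ) :
    ‖(Aᴴ * B).trace‖ ≤
      Real.sqrt ((Aᴴ * A).trace.re) * Real.sqrt ((Bᴴ * B).trace.re) := by
  let x : EuclideanSpace ℂ (n × n) := WithLp.toLp 2 (fun p : n × n => A p.1 p.2)
  let y : EuclideanSpace ℂ (n × n) := WithLp.toLp 2 (fun p : n × n => B p.1 p.2)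
  have h1 : (Aᴴ * B).trace = inner (𝕜 := ℂ) x y := by
    rw [Matrix.trace]
    simp only [Matrix.diag_apply, Matrix.mul_apply, Matrix.conjTranspose_apply]
    rw [PiLp.inner_apply]
    rw [Fintype.sum_prod_type, Finset.sum_comm]
    refine Finset.sum_congr rfl fun i _ => Finset.sum_congr rfl fun j _ => ?_
    simp only [x, y, RCLike.inner_apply, starRingEnd_apply]
    exact mul_comm _ _
  have h2 : ‖x‖ = Real.sqrt ((Aᴴ * A).trace.re) := by
    rw [EuclideanSpace.norm_eq, trace_conjTranspose_mul_self_re]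
    congr 1
    refine Finset.sum_congr rfl fun p _ => ?_
    simp only [x, Complex.sq_norm]
  have h3 : ‖y‖ = Real.sqrt ((Bᴴ * B).trace.re) := by
    rw [EuclideanSpace.norm_eq, trace_conjTranspose_mul_self_re]
    congr 1
    refine Finset.sum_congr rfl fun p _ => ?_
    simp only [y, Complex.sq_norm]
  calc ‖(Aᴴ * B).trace‖ = ‖inner (𝕜 := ℂ) x y‖ := by rw [h1]
    _ ≤ ‖x‖ * ‖y‖ := norm_inner_le_norm x y
    _ = _ := by rw [h2, h3]

lemma fcal_sub : fcal hA (fun x => f x - g x) = fcal hA f - fcal hA g := by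
  unfold fcal
  have : ((↑) ∘ (fun x => f x - g x) ∘ hA.eigenvalues : n → ℂ)
      = fun i => (((↑) ∘ f ∘ hA.eigenvalues : n → ℂ) i - ((↑) ∘ g ∘ hA.eigenvalues : n → ℂ) i) := by
    funext i; simp
  rw [this, ← diagonal_sub, mul_sub, sub_mul]

/-- indicator of positivity -/
def indp (t : ℝ) : ℝ := if 0 < t then 1 else 0
/-- inverse square root cut off at 0 -/
def finv (t : ℝ) : ℝ := if 0 < t then (Real.sqrt t)⁻¹ else 0
/-- fourth root -/
def r4 (t : ℝ) : ℝ := Real.sqrt (Real.sqrt t)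

/-- Duality: the real part of `Tr(V M)` for a contraction `V` is at most the trace norm. -/
lemma re_trace_mul_le_traceNorm (M V : Matrix n n ℂ) (hV : (1 - Vᴴ * V).PosSemidef) :
    ((V * M).trace).re ≤ traceNorm M := by
  have hN : (Mᴴ * M).PosSemidef := posSemidef_conjTranspose_mul_self M
  set N := Mᴴ * M with hNdef
  have h : N.IsHermitian := hN.1
  have hμ : ∀ i, 0 ≤ h.eigenvalues i := hN.eigenvalues_nonneg
  set Pr := fcal h indp with hPrdef
  set G := fcal h finv with hGdef
  set R := fcal h r4 with hRdef
  set H := fcal h Real.sqrt with hHdef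
  have hRpsd : R.PosSemidef := fcal_posSemidef _ _ (fun t => Real.sqrt_nonneg _)
  have hRh : Rᴴ = R := fcal_conjTranspose _ _
  have hGh : Gᴴ = G := fcal_conjTranspose _ _
  have hPrh : Prᴴ = Pr := fcal_conjTranspose _ _
  have hRR : R * R = H := by
    rw [hRdef, hHdef, fcal_mul]
    exact fcal_congr _ _ _ (fun i => Real.mul_self_sqrt (Real.sqrt_nonneg _))
  have hGH : G * H = Pr := by
    rw [hGdef, hHdef, hPrdef, fcal_mul]
    refine fcal_congr _ _ _ fun i => ?_
    by_cases ht : 0 < h.eigenvalues i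
    · have hs : Real.sqrt (h.eigenvalues i) ≠ 0 := by
        positivity
      simp [finv, indp, ht, inv_mul_cancel₀ hs]
    · simp [finv, indp, ht]
  have hNfc : N = fcal h id := (fcal_id h).symm
  have hid_ind : ∀ i, (id (h.eigenvalues i) * indp (h.eigenvalues i)) = id (h.eigenvalues i) := by
    intro i
    by_cases ht : 0 < h.eigenvalues i
    · simp [indp, ht]
    · have : h.eigenvalues i = 0 := le_antisymm (not_lt.mp ht) (hμ i)
      simp [indp, this]
  have hNPr : N * Pr = N := by
    conv_lhs => rw [hNfc]
    rw [hPrdef, fcal_mul]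
    rw [fcal_congr h _ _ hid_ind, fcal_id]
  have hPrN : Pr * N = N := by
    conv_lhs => rw [hNfc]
    rw [hPrdef, fcal_mul]
    rw [fcal_congr h _ _ (fun i => by rw [mul_comm]; exact hid_ind i), fcal_id]
  have hMPr : M * Pr = M := by
    have hZ : (M - M * Pr)ᴴ * (M - M * Pr) = 0 := by
      rw [conjTranspose_sub, conjTranspose_mul, hPrh]
      have e1 : (Mᴴ - Pr * Mᴴ) * (M - M * Pr) = N - N * Pr - Pr * N + Pr * N * Pr := by
        rw [hNdef]; noncomm_ring
      rw [e1, hNPr, hPrN, hNPr]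
      abel
    have := conjTranspose_mul_self_eq_zero.mp hZ
    exact (sub_eq_zero.mp this).symm
  have hEE : (M * G)ᴴ * (M * G) = Pr := by
    have e1 : (M * G)ᴴ * (M * G) = G * N * G := by
      rw [conjTranspose_mul, hGh, hNdef]; noncomm_ring
    rw [e1]
    conv_lhs => rw [hNfc]
    rw [hGdef, hPrdef, fcal_mul, fcal_mul]
    refine fcal_congr _ _ _ fun i => ?_
    by_cases ht : 0 < h.eigenvalues i
    · have hs : Real.sqrt (h.eigenvalues i) ≠ 0 := by positivity
      simp only [finv, indp, id_eq, if_pos ht]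
      field_simp
      exact (Real.sq_sqrt ht.le).symm
    · have h0 : h.eigenvalues i = 0 := le_antisymm (not_lt.mp ht) (hμ i)
      simp [finv, indp, ht, h0]
  set T := V * (M * G) with hTdef
  have h1mPr : ((1 : Matrix n n ℂ) - Pr).PosSemidef := by
    have e : (1 : Matrix n n ℂ) - Pr = fcal h (fun t => (fun _ => (1:ℝ)) t - indp t) := by
      rw [fcal_sub, fcal_one, hPrdef]
    rw [e]
    refine fcal_posSemidef _ _ fun t => ?_
    unfold indp; split <;> norm_num
  have hTT : (1 : Matrix n n ℂ) - Tᴴ * T = (M*G)ᴴ * (1 - Vᴴ*V) * (M*G) + (1 - Pr) := by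
    have e1 : (M*G)ᴴ * ((1:Matrix n n ℂ) - Vᴴ*V) * (M*G) = (M*G)ᴴ*(M*G) - Tᴴ * T := by
      rw [hTdef]; simp only [conjTranspose_mul]; noncomm_ring
    rw [e1, hEE]; abel
  have hTTpsd : ((1:Matrix n n ℂ) - Tᴴ*T).PosSemidef := by
    rw [hTT]; exact (hV.conjTranspose_mul_mul_same (M*G)).add h1mPr
  have htr : (V * M).trace = (R * T * R).trace := by
    have e1 : V * M = T * R * R := by
      conv_lhs => rw [← hMPr, ← hGH, ← hRR]
      rw [hTdef]; noncomm_ring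
    rw [e1, trace_mul_cycle]
  have hRTRconj : (R * Tᴴ * R).trace = star ((R * T * R).trace) := by
    rw [← trace_conjTranspose]
    refine congrArg Matrix.trace ?_
    simp only [conjTranspose_mul, hRh, conjTranspose_conjTranspose]
    noncomm_ring
  have hY : (1 - T)ᴴ * (1 - T) + ((1:Matrix n n ℂ) - Tᴴ*T) = (1 - T) + (1 - Tᴴ) := by
    rw [conjTranspose_sub, conjTranspose_one]; noncomm_ring
  have hYpsd : (((1:Matrix n n ℂ) - T) + (1 - Tᴴ)).PosSemidef := by
    rw [← hY]; exact (posSemidef_conjTranspose_mul_self (1 - T)).add hTTpsd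
  have hRYR : (R * (((1:Matrix n n ℂ) - T) + (1 - Tᴴ)) * R).PosSemidef := by
    have := hYpsd.mul_mul_conjTranspose_same R
    rwa [hRh] at this
  have h0 : 0 ≤ (R * (((1:Matrix n n ℂ) - T) + (1 - Tᴴ)) * R).trace.re :=
    psd_trace_re_nonneg hRYR
  have hexp : R * (((1:Matrix n n ℂ) - T) + (1 - Tᴴ)) * R = (H - R*T*R) + (H - R*Tᴴ*R) := by
    rw [← hRR]; noncomm_ring
  rw [hexp, trace_add, trace_sub, trace_sub, hRTRconj] at h0
  have hTN : traceNorm M = H.trace.re := by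
    rw [traceNorm_eq_sqrt_trace_re, sqrt_eq_fcal]
  rw [htr, hTN]
  simp only [Complex.add_re, Complex.sub_re] at h0
  have hstar_re : (star ((R*T*R).trace)).re = ((R*T*R).trace).re := by
    simp [Complex.star_def]
  rw [hstar_re] at h0
  linarith

lemma entry_eq (X Uc : Matrix n n ℂ) (i : n) :
    (star Uc * X * Uc) i i = dotProduct (star fun j => Uc j i) (X *ᵥ fun j => Uc j i) := by
  simp only [Matrix.mul_apply, dotProduct, Matrix.mulVec, Matrix.star_apply, Pi.star_apply,
    Finset.sum_mul, Finset.mul_sum]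
  rw [Finset.sum_comm]
  refine Finset.sum_congr rfl fun j _ => Finset.sum_congr rfl fun k _ => ?_
  ring

lemma entry_re_nonneg {X : Matrix n n ℂ} (hX : X.PosSemidef) (Uc : Matrix n n ℂ) (i : n) :
    0 ≤ ((star Uc * X * Uc) i i).re := by
  rw [entry_eq]
  exact hX.re_dotProduct_nonneg _

lemma star_mul_self_eigen {C : Matrix n n ℂ} (hC : C.IsHermitian) :
    (star hC.eigenvectorUnitary : Matrix n n ℂ) * C * (hC.eigenvectorUnitary : Matrix n n ℂ)
      = diagonal ((↑) ∘ hC.eigenvalues) := by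
  have h1 : (star hC.eigenvectorUnitary : Matrix n n ℂ) * (hC.eigenvectorUnitary : Matrix n n ℂ) = 1 :=
    Unitary.star_mul_self_of_mem (SetLike.coe_mem _)
  have hsp := hC.spectral_theorem
  set U : Matrix n n ℂ := (hC.eigenvectorUnitary : Matrix n n ℂ) with hU
  set D : Matrix n n ℂ := diagonal ((↑) ∘ hC.eigenvalues) with hD
  rw [hsp, Unitary.conjStarAlgAut_apply]
  simp only [← mul_assoc]
  rw [h1, one_mul, mul_assoc, show star U * U = 1 from h1, mul_one]
  rfl

lemma trace_diagonal_mul (v : n → ℂ) (Z : Matrix n n ℂ) :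
    (diagonal v * Z).trace = ∑ i, v i * Z i i := by
  simp [Matrix.trace, Matrix.diag_apply, Matrix.diagonal_mul]

/-- trace of `fcal f * X` in terms of the conjugated matrix -/
lemma trace_fcal_mul {C : Matrix n n ℂ} (hC : C.IsHermitian) (f : ℝ → ℝ) (X : Matrix n n ℂ) :
    (fcal hC f * X).trace = ∑ i, (f (hC.eigenvalues i) : ℂ) *
      ((star hC.eigenvectorUnitary : Matrix n n ℂ) * X * (hC.eigenvectorUnitary : Matrix n n ℂ)) i i := by
  have e1 : fcal hC f * X = (hC.eigenvectorUnitary : Matrix n n ℂ) *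
      ((diagonal ((↑) ∘ f ∘ hC.eigenvalues)) *
        ((star hC.eigenvectorUnitary : Matrix n n ℂ) * X)) := by
    unfold fcal; noncomm_ring
  rw [e1, trace_mul_comm, mul_assoc, trace_diagonal_mul]
  refine Finset.sum_congr rfl fun i _ => ?_
  rw [mul_assoc]
  rfl

/-- sign function -/
def sgn (t : ℝ) : ℝ := if 0 ≤ t then 1 else -1

/-- Powers–Størmer inequality. -/
lemma powers_stormer {A B : Matrix n n ℂ} (hA : A.PosSemidef) (hB : B.PosSemidef) :
    ((A - B) * (A - B)).trace.re ≤ traceNorm (A * A - B * B) := by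
  have hC : (A - B).IsHermitian := hA.1.sub hB.1
  set C := A - B with hCdef
  set U : Matrix n n ℂ := (hC.eigenvectorUnitary : Matrix n n ℂ) with hUdef
  set S := fcal hC sgn with hSdef
  set Cabs := fcal hC (fun t => |t|) with hCabsdef
  have hSC : S * C = Cabs := by
    conv_lhs => rw [show C = fcal hC id from (fcal_id hC).symm]
    rw [hSdef, hCabsdef, fcal_mul]
    refine fcal_congr _ _ _ fun i => ?_
    unfold sgn
    rcases le_or_gt 0 (hC.eigenvalues i) with ht | ht
    · simp [ht, abs_of_nonneg ht]
    · simp [not_le.mpr ht, abs_of_neg ht]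
  have hCS : C * S = Cabs := by
    conv_lhs => rw [show C = fcal hC id from (fcal_id hC).symm]
    rw [hSdef, hCabsdef, fcal_mul]
    refine fcal_congr _ _ _ fun i => ?_
    unfold sgn
    rcases le_or_gt 0 (hC.eigenvalues i) with ht | ht
    · simp [ht, abs_of_nonneg ht]
    · simp [not_le.mpr ht, abs_of_neg ht]
  have hScontr : ((1 : Matrix n n ℂ) - Sᴴ * S).PosSemidef := by
    have h1 : Sᴴ = S := fcal_conjTranspose _ _
    have h2 : S * S = 1 := by
      rw [hSdef, fcal_mul, show (fun x => sgn x * sgn x) = fun _ : ℝ => (1:ℝ) by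
        funext t; unfold sgn; split <;> norm_num]
      exact fcal_one hC
    rw [h1, h2, sub_self]
    exact PosSemidef.zero
  -- diagonal entries of the conjugated A+B dominate |eigenvalues of C|
  set Y := star U * (A + B) * U with hYdef
  have hdiagC : star U * C * U = diagonal ((↑) ∘ hC.eigenvalues) := star_mul_self_eigen hC
  have hentry : ∀ i, |hC.eigenvalues i| ≤ (Y i i).re := by
    intro i
    have e1 : star U * (B + B) * U = Y - star U * C * U := by
      rw [hYdef, hCdef]; noncomm_ring
    have e2 : star U * (A + A) * U = Y + star U * C * U := by
      rw [hYdef, hCdef]; noncomm_ring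
    have p1 := entry_re_nonneg (hB.add hB) U i
    have p2 := entry_re_nonneg (hA.add hA) U i
    rw [e1] at p1; rw [e2] at p2
    rw [hdiagC] at p1 p2
    simp only [Matrix.sub_apply, Matrix.add_apply, Complex.sub_re, Complex.add_re,
      diagonal_apply_eq, Function.comp_apply, Complex.ofReal_re] at p1 p2
    rw [abs_le]
    constructor <;> linarith
  -- trace formula
  have htr1 : (Cabs * (A + B)).trace.re = ∑ i, |hC.eigenvalues i| * (Y i i).re := by
    rw [hCabsdef, trace_fcal_mul, trace_re_sum]
    refine Finset.sum_congr rfl fun i _ => ?_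
    exact Complex.re_ofReal_mul _ _
  have hCC : (C * C).trace.re = ∑ i, hC.eigenvalues i * hC.eigenvalues i := by
    conv_lhs => rw [show C = fcal hC id from (fcal_id hC).symm]
    rw [fcal_mul, fcal_trace_re]
    simp only [id_eq]
  have step1 : (C * C).trace.re ≤ (Cabs * (A + B)).trace.re := by
    rw [hCC, htr1]
    refine Finset.sum_le_sum fun i _ => ?_
    have h1 := hentry i
    have h2 : (0:ℝ) ≤ |hC.eigenvalues i| := abs_nonneg _
    nlinarith [abs_mul_abs_self (hC.eigenvalues i)]
  -- relate to S * (A*A - B*B)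
  have step2 : (Cabs * (A + B)).trace = (S * (A * A - B * B)).trace := by
    have e : C * (A + B) + (A + B) * C = (A*A - B*B) + (A*A - B*B) := by
      rw [hCdef]; noncomm_ring
    have t1 : (S * (C * (A + B))).trace = (Cabs * (A + B)).trace := by
      rw [← mul_assoc, hSC]
    have t2 : (S * ((A + B) * C)).trace = (Cabs * (A + B)).trace := by
      rw [← mul_assoc, trace_mul_cycle, hCS]
    have : (S * (C * (A + B) + (A + B) * C)).trace
        = (Cabs * (A + B)).trace + (Cabs * (A + B)).trace := by
      rw [mul_add, trace_add, t1, t2]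
    rw [e, mul_add, trace_add] at this
    have h2 : (2:ℂ) * (S * (A * A - B * B)).trace = 2 * (Cabs * (A + B)).trace := by
      rw [two_mul, two_mul]; exact this
    exact (mul_left_cancel₀ two_ne_zero h2).symm
  have step3 : (S * (A * A - B * B)).trace.re ≤ traceNorm (A * A - B * B) :=
    re_trace_mul_le_traceNorm _ S hScontr
  calc (C * C).trace.re ≤ (Cabs * (A + B)).trace.re := step1
    _ = (S * (A * A - B * B)).trace.re := by rw [step2]
    _ ≤ traceNorm (A * A - B * B) := step3

lemma hNfc {N : Matrix n n ℂ} (h : N.IsHermitian) : N = fcal h id := (fcal_id h).symm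

lemma trace_sqrt_congr {A B : Matrix n n ℂ} (hA : A.PosSemidef) (hB : B.PosSemidef)
    (h : A = B) : hA.sqrt.trace = hB.sqrt.trace := by
  subst h; rfl

lemma traceNorm_nonneg (M : Matrix n n ℂ) : 0 ≤ traceNorm M :=
  psd_trace_re_nonneg (posSemidef_conjTranspose_mul_self M).posSemidef_sqrt

/-- The trace norm is attained as `Re Tr(W M)` for some contraction `W`. -/
lemma traceNorm_exists_contraction (M : Matrix n n ℂ) :
    ∃ W : Matrix n n ℂ, ((1 : Matrix n n ℂ) - Wᴴ * W).PosSemidef ∧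
      ((W * M).trace).re = traceNorm M := by
  have hN : (Mᴴ * M).PosSemidef := posSemidef_conjTranspose_mul_self M
  set N := Mᴴ * M with hNdef
  have h : N.IsHermitian := hN.1
  have hμ : ∀ i, 0 ≤ h.eigenvalues i := hN.eigenvalues_nonneg
  set G := fcal h finv with hGdef
  have hGh : Gᴴ = G := fcal_conjTranspose _ _
  refine ⟨G * Mᴴ, ?_, ?_⟩
  · -- contraction
    set K := fcal h (fun t => finv t * finv t) with hKdef
    have hKh : Kᴴ = K := fcal_conjTranspose _ _
    have hGG : G * G = K := by rw [hGdef, hKdef, fcal_mul]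
    have hWW : (G * Mᴴ)ᴴ * (G * Mᴴ) = M * K * Mᴴ := by
      rw [conjTranspose_mul, conjTranspose_conjTranspose, hGh, ← hGG]; noncomm_ring
    have hKNK : K * N * K = K := by
      conv_lhs => rw [hNfc h]
      rw [hKdef, fcal_mul, fcal_mul]
      refine fcal_congr _ _ _ fun i => ?_
      by_cases ht : 0 < h.eigenvalues i
      · have hs : Real.sqrt (h.eigenvalues i) ≠ 0 := by positivity
        simp only [finv, id_eq, if_pos ht]
        field_simp
        exact (Real.sq_sqrt ht.le).symm
      · have h0 : h.eigenvalues i = 0 := le_antisymm (not_lt.mp ht) (hμ i)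
        simp [finv, ht, h0]
    set E := M * K * Mᴴ with hEdef
    have hEh : Eᴴ = E := by
      rw [hEdef, conjTranspose_mul, conjTranspose_mul, conjTranspose_conjTranspose, hKh]
      noncomm_ring
    have hEE : E * E = E := by
      have e1 : E * E = M * (K * N * K) * Mᴴ := by
        rw [hEdef, hNdef]; noncomm_ring
      rw [e1, hKNK, hEdef]
    have hform : (1 : Matrix n n ℂ) - E = ((1 : Matrix n n ℂ) - E)ᴴ * ((1 : Matrix n n ℂ) - E) := by
      rw [conjTranspose_sub, conjTranspose_one, hEh]
      have e2 : ((1 : Matrix n n ℂ) - E) * ((1 : Matrix n n ℂ) - E) = 1 - E - E + E * E := by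
        noncomm_ring
      rw [e2, hEE]; abel
    rw [hWW, hform]
    exact posSemidef_conjTranspose_mul_self _
  · -- trace value
    have e1 : (G * Mᴴ) * M = fcal h (fun t => finv t * id t) := by
      rw [mul_assoc, ← hNdef]
      conv_lhs => rw [hNfc h]
      rw [hGdef, fcal_mul]
    have e2 : traceNorm M = (fcal h Real.sqrt).trace.re := by
      rw [traceNorm_eq_sqrt_trace_re, sqrt_eq_fcal]
    rw [e1, e2, fcal_trace_re, fcal_trace_re]
    refine Finset.sum_congr rfl fun i _ => ?_
    by_cases ht : 0 < h.eigenvalues i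
    · have hs : Real.sqrt (h.eigenvalues i) ≠ 0 := by positivity
      simp only [finv, id_eq, if_pos ht]
      field_simp
      exact (Real.sq_sqrt ht.le).symm
    · have h0 : h.eigenvalues i = 0 := le_antisymm (not_lt.mp ht) (hμ i)
      simp [finv, ht, h0]

/-- Cauchy-Schwarz bound for one measurement outcome. -/
lemma meas_bound {A B P W : Matrix n n ℂ} (hA : A.PosSemidef) (hB : B.PosSemidef)
    (hP : P.PosSemidef) (hPP : P * P = P) (hW : ((1:Matrix n n ℂ) - Wᴴ * W).PosSemidef) :
    ((W * (B * (P * A))).trace).re ≤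
      Real.sqrt ((P * (B*B)).trace.re) * Real.sqrt ((P * (A*A)).trace.re) := by
  have hPh : Pᴴ = P := hP.1
  have hAh : Aᴴ = A := hA.1
  have hBh : Bᴴ = B := hB.1
  set X := P * B * Wᴴ with hXdef
  set Y := P * A with hYdef
  have hXh : Xᴴ = W * B * P := by
    rw [hXdef, conjTranspose_mul, conjTranspose_mul, conjTranspose_conjTranspose, hBh, hPh]
    noncomm_ring
  have hXY : Xᴴ * Y = W * (B * (P * A)) := by
    rw [hXh, hYdef]
    have e : (W * B * P) * (P * A) = W * (B * ((P*P) * A)) := by noncomm_ring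
    rw [e, hPP]
  have hZ : (B * P * B).PosSemidef := by
    have := hP.mul_mul_conjTranspose_same B; rwa [hBh] at this
  have hXX : ((Xᴴ * X).trace).re ≤ (P * (B*B)).trace.re := by
    have c1 : Xᴴ * X = W * ((B * (P*P) * B) * Wᴴ) := by rw [hXh, hXdef]; noncomm_ring
    rw [hPP] at c1
    have c2 : (Xᴴ * X).trace = ((B*P*B) * (Wᴴ*W)).trace := by
      rw [c1, trace_mul_comm, mul_assoc]
    have c3 : 0 ≤ ((B*P*B) * ((1:Matrix n n ℂ) - Wᴴ*W)).trace.re := trace_mul_psd_nonneg hZ hW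
    have c4 : (B*P*B).trace = (P * (B*B)).trace := by rw [trace_mul_cycle, trace_mul_comm]
    have c5 : ((B*P*B) * ((1:Matrix n n ℂ) - Wᴴ*W)) = (B*P*B) - (B*P*B)*(Wᴴ*W) := by
      rw [mul_sub, mul_one]
    rw [c5, trace_sub] at c3
    rw [c2]
    simp only [Complex.sub_re] at c3
    have := congrArg Complex.re c4
    linarith
  have hYY : ((Yᴴ * Y).trace).re = (P * (A*A)).trace.re := by
    have c1 : Yᴴ * Y = A * (P*P) * A := by rw [hYdef, conjTranspose_mul, hAh, hPh]; noncomm_ring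
    rw [hPP] at c1
    have c2 : (A*P*A).trace = (P*(A*A)).trace := by rw [trace_mul_cycle, trace_mul_comm]
    rw [c1, c2]
  calc ((W * (B * (P * A))).trace).re = ((Xᴴ * Y).trace).re := by rw [hXY]
    _ ≤ ‖(Xᴴ*Y).trace‖ := Complex.re_le_norm _
    _ ≤ Real.sqrt (((Xᴴ*X).trace).re) * Real.sqrt (((Yᴴ*Y).trace).re) :=
        abs_trace_conjTranspose_mul_le X Y
    _ ≤ _ :=
        mul_le_mul (Real.sqrt_le_sqrt hXX) (Real.sqrt_le_sqrt (le_of_eq hYY))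
          (Real.sqrt_nonneg _) (Real.sqrt_nonneg _)

/-- scalar endgame for the upper bound -/
lemma endgame {a b F t : ℝ} (ha0 : 0 ≤ a) (ha1 : a ≤ 1) (hb0 : 0 ≤ b) (hb1 : b ≤ 1)
    (hF0 : 0 ≤ F) (hab : a - b = t / 2) (ht0 : 0 ≤ t)
    (hFle : F ≤ Real.sqrt b * Real.sqrt a + Real.sqrt (1-b) * Real.sqrt (1-a)) :
    t ≤ 2 * Real.sqrt (1 - F^2) := by
  set x := Real.sqrt a with hxdef
  set y := Real.sqrt b with hydef
  set z := Real.sqrt (1-a) with hzdef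
  set w := Real.sqrt (1-b) with hwdef
  have hx2 : x^2 = a := Real.sq_sqrt ha0
  have hy2 : y^2 = b := Real.sq_sqrt hb0
  have hz2 : z^2 = 1 - a := Real.sq_sqrt (by linarith)
  have hw2 : w^2 = 1 - b := Real.sq_sqrt (by linarith)
  have hx0 : 0 ≤ x := Real.sqrt_nonneg _
  have hy0 : 0 ≤ y := Real.sqrt_nonneg _
  have hz0 : 0 ≤ z := Real.sqrt_nonneg _
  have hw0 : 0 ≤ w := Real.sqrt_nonneg _
  have hF2 : F^2 ≤ (y*x + w*z)^2 :=
    pow_le_pow_left₀ hF0 hFle 2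
  have u5 : (y*x + w*z)^2 + (x*w - y*z)^2 = 1 := by
    have e : (y*x + w*z)^2 + (x*w - y*z)^2 = (x^2 + z^2) * (y^2 + w^2) := by ring
    rw [e, hx2, hy2, hz2, hw2]
    ring
  have u1 : (x*w + y*z)^2 ≤ 1 := by
    have e : (x*w + y*z)^2 + (x*z - y*w)^2 = (x^2 + y^2) * (w^2 + z^2) := by ring
    have e2 : (x^2 + y^2) * (w^2 + z^2) = (a + b) * (2 - a - b) := by
      rw [hx2, hy2, hz2, hw2]; ring
    nlinarith [sq_nonneg (x*z - y*w), sq_nonneg (1 - a - b)]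
  have u2 : (a - b)^2 ≤ (x*w - y*z)^2 := by
    have e : a - b = (x*w - y*z)*(x*w + y*z) := by
      linear_combination (z^2)*hy2 + b*hz2 - (w^2)*hx2 - a*hw2
    rw [e]
    have h1 : ((x*w - y*z)*(x*w + y*z))^2 = (x*w - y*z)^2 * (x*w + y*z)^2 := by ring
    rw [h1]
    nlinarith [sq_nonneg (x*w - y*z), u1]
  have hfinal : (a - b)^2 ≤ 1 - F^2 := by nlinarith [u5, u2, hF2]
  have habnn : 0 ≤ a - b := by rw [hab]; linarith
  have hle : a - b ≤ Real.sqrt (1 - F^2) := by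
    rw [show a - b = Real.sqrt ((a-b)^2) from (Real.sqrt_sq habnn).symm]
    exact Real.sqrt_le_sqrt hfinal
  rw [hab] at hle
  linarith

end FvG

set_option maxHeartbeats 2000000 in
open FvG in
theorem trace_distance_fidelity_bounds (d : ℕ)
    (ρ σ : Matrix (Fin d) (Fin d) ℂ)
    (hρ : ρ.PosSemidef) (hσ : σ.PosSemidef)
    (hρ1 : ρ.trace = 1) (hσ1 : σ.trace = 1)
    (F : ℝ)
    (hF : F = ((hσ.mul_mul_conjTranspose_same hρ.sqrt).sqrt).trace.re) :
    2 * (1 - F) ≤ traceNorm (ρ - σ) ∧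
      traceNorm (ρ - σ) ≤ 2 * Real.sqrt (1 - F ^ 2) := by
  have hApsd : hρ.sqrt.PosSemidef := hρ.posSemidef_sqrt
  have hBpsd : hσ.sqrt.PosSemidef := hσ.posSemidef_sqrt
  set A := hρ.sqrt with hAdef
  set B := hσ.sqrt with hBdef
  have hAh : Aᴴ = A := hApsd.1
  have hBh : Bᴴ = B := hBpsd.1
  have hAA : A * A = ρ := hρ.sqrt_mul_self
  have hBB : B * B = σ := hσ.sqrt_mul_self
  set M := B * A with hMdef
  -- F equals the trace norm of M
  have heq : A * σ * Aᴴ = Mᴴ * M := by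
    rw [hMdef, conjTranspose_mul, hAh, hBh, ← hBB]
    noncomm_ring
  have hFM : F = traceNorm M :=
    hF.trans (congrArg Complex.re
      (trace_sqrt_congr (hσ.mul_mul_conjTranspose_same A) (posSemidef_conjTranspose_mul_self M) heq))
  have hF0 : 0 ≤ F := by rw [hFM]; exact traceNorm_nonneg M
  -- ============ lower bound ============
  have hps := powers_stormer hApsd hBpsd
  rw [hAA, hBB] at hps
  have hTrM_le : ((A * B).trace).re ≤ F := by
    rw [hFM]
    have h1 : ((1 : Matrix (Fin d) (Fin d) ℂ) - (1:Matrix (Fin d) (Fin d) ℂ)ᴴ * 1).PosSemidef := by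
      rw [conjTranspose_one, one_mul, sub_self]
      exact Matrix.PosSemidef.zero
    have h2 := re_trace_mul_le_traceNorm M 1 h1
    rw [one_mul] at h2
    rwa [hMdef, trace_mul_comm] at h2
  have hexpand : ((A - B) * (A - B)).trace = ρ.trace + σ.trace - (A*B).trace - (B*A).trace := by
    have e : (A - B) * (A - B) = A*A + B*B - A*B - B*A := by noncomm_ring
    rw [e, ← hAA, ← hBB]
    rw [trace_sub, trace_sub, trace_add]
  have hlow : 2*(1 - F) ≤ traceNorm (ρ - σ) := by
    have h2 : ((A-B)*(A-B)).trace.re = 2 - 2*((A*B).trace).re := by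
      rw [hexpand, hρ1, hσ1, trace_mul_comm B A]
      simp only [Complex.sub_re, Complex.add_re, Complex.one_re]
      ring
    rw [h2] at hps
    linarith
  refine ⟨hlow, ?_⟩
  -- ============ upper bound ============
  have hΔherm : (ρ - σ).IsHermitian := hρ.1.sub hσ.1
  set Δ := ρ - σ with hΔdef
  set lam := hΔherm.eigenvalues with hlam
  -- sum of eigenvalues is zero
  have htrΔ : Δ.trace = 0 := by rw [hΔdef, trace_sub, hρ1, hσ1, sub_self]
  have hsum0 : ∑ i, lam i = 0 := by
    have e1 : Δ.trace.re = ∑ i, lam i := by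
      conv_lhs => rw [hNfc hΔherm]
      rw [fcal_trace_re]
      rfl
    rw [htrΔ] at e1
    simpa using e1.symm
  have htN : traceNorm Δ = ∑ i, |lam i| := traceNorm_hermitian hΔherm
  -- the projector P
  set P := fcal hΔherm indp with hPdef
  have hPpsd : P.PosSemidef := fcal_posSemidef _ _ (fun t => by unfold indp; split <;> norm_num)
  have hPh : Pᴴ = P := fcal_conjTranspose _ _
  have hPP : P * P = P := by
    rw [hPdef, fcal_mul]
    refine fcal_congr _ _ _ fun i => ?_
    unfold indp; split <;> norm_num
  have hQeq : (1 : Matrix (Fin d) (Fin d) ℂ) - P = fcal hΔherm (fun t => (fun _ => (1:ℝ)) t - indp t) := by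
    rw [fcal_sub, fcal_one, hPdef]
  have hQpsd : ((1 : Matrix (Fin d) (Fin d) ℂ) - P).PosSemidef := by
    rw [hQeq]
    exact fcal_posSemidef _ _ (fun t => by unfold indp; split <;> norm_num)
  have hQh : ((1 : Matrix (Fin d) (Fin d) ℂ) - P)ᴴ = 1 - P := hQpsd.1
  have hQQ : ((1 : Matrix (Fin d) (Fin d) ℂ) - P) * (1 - P) = 1 - P := by
    rw [hQeq, fcal_mul]
    refine fcal_congr _ _ _ fun i => ?_
    unfold indp; split <;> norm_num
  -- measurement probabilities
  set a := ((P * ρ).trace).re with hadef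
  set b := ((P * σ).trace).re with hbdef
  have ha0 : 0 ≤ a := trace_mul_psd_nonneg hPpsd hρ
  have hb0 : 0 ≤ b := trace_mul_psd_nonneg hPpsd hσ
  have ha1 : a ≤ 1 := by
    have h1 : 0 ≤ (((1 : Matrix (Fin d) (Fin d) ℂ) - P) * ρ).trace.re :=
      trace_mul_psd_nonneg hQpsd hρ
    have h2 : ((1 : Matrix (Fin d) (Fin d) ℂ) - P) * ρ = ρ - P * ρ := by
      rw [sub_mul, one_mul]
    rw [h2, trace_sub] at h1
    simp only [Complex.sub_re, hρ1, Complex.one_re] at h1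
    linarith
  have hb1 : b ≤ 1 := by
    have h1 : 0 ≤ (((1 : Matrix (Fin d) (Fin d) ℂ) - P) * σ).trace.re :=
      trace_mul_psd_nonneg hQpsd hσ
    have h2 : ((1 : Matrix (Fin d) (Fin d) ℂ) - P) * σ = σ - P * σ := by
      rw [sub_mul, one_mul]
    rw [h2, trace_sub] at h1
    simp only [Complex.sub_re, hσ1, Complex.one_re] at h1
    linarith
  -- a - b = traceNorm Δ / 2
  have hab : a - b = traceNorm Δ / 2 := by
    have e1 : (P * Δ).trace.re = ∑ i, indp (lam i) * lam i := by
      conv_lhs => rw [hNfc hΔherm]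
      rw [hPdef, fcal_mul, fcal_trace_re]
      rfl
    have e2 : ∀ i, indp (lam i) * lam i = (lam i + |lam i|) / 2 := by
      intro i
      unfold indp
      rcases lt_or_ge 0 (lam i) with ht | ht
      · rw [if_pos ht, abs_of_pos ht]; ring
      · rw [if_neg (not_lt.mpr ht), abs_of_nonpos ht]; ring
    have e3 : (P * Δ).trace.re = traceNorm Δ / 2 := by
      rw [e1, htN]
      rw [Finset.sum_congr rfl (fun i _ => e2 i), ← Finset.sum_div, Finset.sum_add_distrib, hsum0]
      ring
    have e4 : (P * Δ).trace = (P * ρ).trace - (P * σ).trace := by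
      rw [hΔdef, mul_sub, trace_sub]
    rw [e4] at e3
    simp only [Complex.sub_re] at e3
    rw [hadef, hbdef]
    exact e3
  have htN0 : 0 ≤ traceNorm Δ := traceNorm_nonneg Δ
  -- the optimal contraction and the Cauchy-Schwarz bounds
  obtain ⟨W, hW, hWtr⟩ := traceNorm_exists_contraction M
  have hsplit : W * M = W * (B * (P * A)) + W * (B * ((1 - P) * A)) := by
    rw [hMdef]; noncomm_ring
  have hbd1 := meas_bound hApsd hBpsd hPpsd hPP hW
  have hbd2 := meas_bound hApsd hBpsd hQpsd hQQ hW
  rw [hAA, hBB] at hbd1 hbd2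
  have hq1 : (((1:Matrix (Fin d) (Fin d) ℂ) - P) * σ).trace.re = 1 - b := by
    rw [sub_mul, one_mul, trace_sub]
    simp only [Complex.sub_re, hσ1, Complex.one_re]
    rfl
  have hq2 : (((1:Matrix (Fin d) (Fin d) ℂ) - P) * ρ).trace.re = 1 - a := by
    rw [sub_mul, one_mul, trace_sub]
    simp only [Complex.sub_re, hρ1, Complex.one_re]
    rfl
  rw [hq1, hq2] at hbd2
  have hFle : F ≤ Real.sqrt b * Real.sqrt a + Real.sqrt (1-b) * Real.sqrt (1-a) := by
    rw [← hWtr] at hFM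
    rw [hFM, hsplit, trace_add]
    simp only [Complex.add_re]
    exact add_le_add hbd1 hbd2
  -- ============ scalar endgame ============
  exact endgame ha0 ha1 hb0 hb1 hF0 hab htN0 hFle
end
end

section
/- Let Φ be a quantum channel on d×d matrices with K(Φ) ∩ U(d) = ∅ and C_Φ = min_{L ∈ K(Φ)} (1/d) Tr(|L| − I_d)² > 0, and let Ψ be a Schur channel on m×m matrices. Then any element L of the Kraus operator space of Ψ ⊗ Φ decomposes as a direct sum L = ⊕_{k=1}^m L_k with each L_k ∈ K(Φ), and consequently C_{Ψ⊗Φ} ≥ C_Φ. -/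
open Matrix
open scoped Matrix ComplexOrder Kronecker

noncomputable section

/-- The absolute value `|L| = √(LᴴL)` of a complex matrix. -/
def matrixAbs {n : Type*} [Fintype n] [DecidableEq n] (L : Matrix n n ℂ) :
    Matrix n n ℂ :=
  (Matrix.posSemidef_conjTranspose_mul_self L).1.eigenvectorUnitary.1 *
    diagonal ((↑) ∘ (√·) ∘ (Matrix.posSemidef_conjTranspose_mul_self L).1.eigenvalues) *
    (star (Matrix.posSemidef_conjTranspose_mul_self L).1.eigenvectorUnitary : Matrix n n ℂ)

namespace KrausAux

variable {m d : ℕ}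

open scoped MatrixOrder

lemma matrixAbs_eq_sqrt {n : Type*} [Fintype n] [DecidableEq n] (L : Matrix n n ℂ) :
    matrixAbs L = CFC.sqrt (Lᴴ * L) := by
  rw [CFC.sqrt_eq_real_sqrt _ (Matrix.posSemidef_conjTranspose_mul_self L).nonneg, cfcₙ_eq_cfc,
    (Matrix.posSemidef_conjTranspose_mul_self L).1.cfc_eq, IsHermitian.cfc, Unitary.conjStarAlgAut_apply]
  rfl

/-- Block-diagonal matrix with blocks `M k`. -/
def bd (M : Fin m → Matrix (Fin d) (Fin d) ℂ) :
    Matrix (Fin m × Fin d) (Fin m × Fin d) ℂ :=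
  Matrix.of fun p q => if p.1 = q.1 then M p.1 p.2 q.2 else 0

lemma bd_apply (M : Fin m → Matrix (Fin d) (Fin d) ℂ) (p q) :
    bd M p q = if p.1 = q.1 then M p.1 p.2 q.2 else 0 := rfl

lemma bd_mul (M N : Fin m → Matrix (Fin d) (Fin d) ℂ) :
    bd M * bd N = bd fun k => M k * N k := by
  ext ⟨k, i⟩ ⟨k', j⟩
  simp only [Matrix.mul_apply, bd_apply, Fintype.sum_prod_type]
  rcases eq_or_ne k k' with h | h
  · subst h
    simp [Finset.sum_ite_eq, Matrix.mul_apply]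
  · rw [if_neg h, Finset.sum_eq_zero]
    intro k'' _
    rw [Finset.sum_eq_zero]
    intro j' _
    by_cases h2 : k = k''
    · subst h2; rw [if_neg h, mul_zero]
    · rw [if_neg h2, zero_mul]

lemma bd_conjTranspose (M : Fin m → Matrix (Fin d) (Fin d) ℂ) :
    (bd M)ᴴ = bd fun k => (M k)ᴴ := by
  ext ⟨k, i⟩ ⟨k', j⟩
  simp only [Matrix.conjTranspose_apply, bd_apply]
  rcases eq_or_ne k k' with h | h
  · subst h; simp
  · simp [if_neg h, if_neg (Ne.symm h)]

lemma bd_one : (bd fun _ : Fin m => (1 : Matrix (Fin d) (Fin d) ℂ)) = 1 := by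
  ext ⟨k, i⟩ ⟨k', j⟩
  simp only [bd_apply, Matrix.one_apply, Prod.mk.injEq]
  rcases eq_or_ne k k' with h | h
  · subst h; simp
  · simp [if_neg h, h]

lemma bd_sub (M N : Fin m → Matrix (Fin d) (Fin d) ℂ) :
    bd M - bd N = bd fun k => M k - N k := by
  ext ⟨k, i⟩ ⟨k', j⟩
  simp only [Matrix.sub_apply, bd_apply]
  rcases eq_or_ne k k' with h | h
  · subst h; simp
  · simp [if_neg h]

lemma bd_add (M N : Fin m → Matrix (Fin d) (Fin d) ℂ) :
    bd M + bd N = bd fun k => M k + N k := by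
  ext ⟨k, i⟩ ⟨k', j⟩
  simp only [Matrix.add_apply, bd_apply]
  rcases eq_or_ne k k' with h | h
  · subst h; simp
  · simp [if_neg h]

lemma bd_smul (c : ℂ) (M : Fin m → Matrix (Fin d) (Fin d) ℂ) :
    c • bd M = bd fun k => c • M k := by
  ext ⟨k, i⟩ ⟨k', j⟩
  simp only [Matrix.smul_apply, bd_apply, smul_eq_mul]
  rcases eq_or_ne k k' with h | h
  · subst h; simp
  · simp [if_neg h]

lemma bd_posSemidef {M : Fin m → Matrix (Fin d) (Fin d) ℂ}
    (h : ∀ k, (M k).PosSemidef) : (bd M).PosSemidef := by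
  choose B hB using fun k => (⟨CFC.sqrt (M k), by
    rw [(CFC.sqrt_nonneg (M k)).posSemidef.1.eq, CFC.sqrt_mul_sqrt_self _ (h k).nonneg]⟩ :
      ∃ B : Matrix (Fin d) (Fin d) ℂ, M k = Bᴴ * B)
  have : bd M = (bd B)ᴴ * bd B := by
    rw [bd_conjTranspose, bd_mul]
    exact congrArg bd (funext hB)
  rw [this]
  exact Matrix.posSemidef_conjTranspose_mul_self _

lemma bd_trace (M : Fin m → Matrix (Fin d) (Fin d) ℂ) :
    (bd M).trace = ∑ k, (M k).trace := by
  simp [Matrix.trace, Matrix.diag, bd_apply, Fintype.sum_prod_type]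

lemma matrixAbs_bd (M : Fin m → Matrix (Fin d) (Fin d) ℂ) :
    matrixAbs (bd M) = bd fun k => matrixAbs (M k) := by
  have hpsd : (bd fun k => matrixAbs (M k)).PosSemidef :=
    bd_posSemidef fun k => by
      rw [matrixAbs_eq_sqrt]; exact (CFC.sqrt_nonneg _).posSemidef
  have hsq : (bd fun k => matrixAbs (M k)) ^ 2 = (bd M)ᴴ * bd M := by
    rw [pow_two, bd_mul, bd_conjTranspose, bd_mul]
    have : (fun k => matrixAbs (M k) * matrixAbs (M k)) = fun k => (M k)ᴴ * M k :=
      funext fun k => by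
        rw [matrixAbs_eq_sqrt]
        exact CFC.sqrt_mul_sqrt_self _ (Matrix.posSemidef_conjTranspose_mul_self (M k)).nonneg
    rw [this]
  rw [matrixAbs_eq_sqrt]
  exact CFC.sqrt_unique (by rw [← pow_two]; exact hsq) hpsd.nonneg

end KrausAux

/-- If `Ψ` is a Schur channel on `m×m` matrices (with diagonal Kraus
operators `diagonal (D a)`) and `Φ` is a channel on `d×d` matrices with Kraus
operators `E j`, then every element of the Kraus operator space of `Ψ ⊗ Φ`
(spanned by the `diagonal (D a) ⊗ₖ E j`) is a direct sum `⊕ₖ Lₖ` with `Lₖ ∈ K(Φ)`,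
and consequently `C_{Ψ⊗Φ} ≥ C_Φ`. -/
theorem kraus_space_of_schur_tensor_channel (m d : ℕ) (hm : 0 < m) (hd : 0 < d)
    {ι κ : Type*} [Fintype ι] [Fintype κ]
    (E : ι → Matrix (Fin d) (Fin d) ℂ)
    (hkrausE : ∑ j, (E j)ᴴ * E j = 1)
    (hnounitary : ∀ L ∈ Submodule.span ℂ (Set.range E),
      L ∉ Matrix.unitaryGroup (Fin d) ℂ)
    (D : κ → (Fin m → ℂ))
    (hkrausD : ∑ a, (Matrix.diagonal (D a))ᴴ * Matrix.diagonal (D a) = 1)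
    (CΦ : ℝ) (hCΦ : 0 < CΦ)
    (hC : ∀ L ∈ Submodule.span ℂ (Set.range E),
      CΦ ≤ (1 / d : ℝ) * (((matrixAbs L - 1) ^ 2).trace).re) :
    ∀ L ∈ Submodule.span ℂ
        (Set.range fun aj : κ × ι =>
          (Matrix.diagonal (D aj.1)) ⊗ₖ E aj.2),
      (∃ Lk : Fin m → Matrix (Fin d) (Fin d) ℂ,
        (∀ k, Lk k ∈ Submodule.span ℂ (Set.range E)) ∧
        ∀ k i k' j, L (k, i) (k', j) = if k = k' then Lk k i j else 0) ∧
      CΦ ≤ (1 / (m * d) : ℝ) * (((matrixAbs L - 1) ^ 2).trace).re := by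
  intro L hL
  -- first, the decomposition
  have hdec : ∃ Lk : Fin m → Matrix (Fin d) (Fin d) ℂ,
      (∀ k, Lk k ∈ Submodule.span ℂ (Set.range E)) ∧ L = KrausAux.bd Lk := by
    induction hL using Submodule.span_induction with
    | mem x hx =>
      obtain ⟨⟨a, j⟩, rfl⟩ := hx
      refine ⟨fun k => D a k • E j, fun k => Submodule.smul_mem _ _
        (Submodule.subset_span ⟨j, rfl⟩), ?_⟩
      ext ⟨k, i⟩ ⟨k', j'⟩
      simp only [Matrix.kroneckerMap_apply, KrausAux.bd_apply, Matrix.diagonal_apply,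
        Matrix.smul_apply, smul_eq_mul]
      rcases eq_or_ne k k' with h | h
      · subst h; simp
      · simp [if_neg h]
    | zero =>
      refine ⟨fun _ => 0, fun k => Submodule.zero_mem _, ?_⟩
      ext ⟨k, i⟩ ⟨k', j⟩
      simp only [Matrix.zero_apply, KrausAux.bd_apply]
      rcases eq_or_ne k k' with h | h
      · subst h; simp
      · simp [if_neg h]
    | add x y hx hy ihx ihy =>
      obtain ⟨Mx, hMx, rfl⟩ := ihx
      obtain ⟨My, hMy, rfl⟩ := ihy
      exact ⟨fun k => Mx k + My k, fun k => Submodule.add_mem _ (hMx k) (hMy k),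
        KrausAux.bd_add Mx My⟩
    | smul c x hx ihx =>
      obtain ⟨Mx, hMx, rfl⟩ := ihx
      exact ⟨fun k => c • Mx k, fun k => Submodule.smul_mem _ _ (hMx k),
        KrausAux.bd_smul c Mx⟩
  obtain ⟨Lk, hLk, rfl⟩ := hdec
  refine ⟨⟨Lk, hLk, fun k i k' j => rfl⟩, ?_⟩
  -- the trace computation
  have habs : matrixAbs (KrausAux.bd Lk) = KrausAux.bd fun k => matrixAbs (Lk k) :=
    KrausAux.matrixAbs_bd Lk
  have htr : (((matrixAbs (KrausAux.bd Lk) - 1) ^ 2).trace).re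
      = ∑ k, (((matrixAbs (Lk k) - 1) ^ 2).trace).re := by
    rw [habs, ← KrausAux.bd_one, KrausAux.bd_sub, pow_two, KrausAux.bd_mul,
      KrausAux.bd_trace]
    simp [← pow_two, Complex.re_sum]
  rw [htr]
  have hdpos : (0 : ℝ) < d := by exact_mod_cast hd
  have hmpos : (0 : ℝ) < m := by exact_mod_cast hm
  have key : ∀ k, (d : ℝ) * CΦ ≤ (((matrixAbs (Lk k) - 1) ^ 2).trace).re := by
    intro k
    have := hC (Lk k) (hLk k)
    rw [div_mul_eq_mul_div, one_mul, le_div_iff₀ hdpos] at this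
    linarith [this]
  have hsum : (m : ℝ) * ((d : ℝ) * CΦ) ≤ ∑ k, (((matrixAbs (Lk k) - 1) ^ 2).trace).re := by
    calc (m : ℝ) * ((d : ℝ) * CΦ) = ∑ _k : Fin m, (d : ℝ) * CΦ := by
          simp [Finset.sum_const, mul_comm]
      _ ≤ _ := Finset.sum_le_sum fun k _ => key k
  rw [div_mul_eq_mul_div, one_mul, le_div_iff₀ (by positivity)]
  calc CΦ * ((m : ℝ) * d) = (m : ℝ) * ((d : ℝ) * CΦ) := by ring
    _ ≤ _ := hsum
end
end

section
/- Let Φ be the map on 4×4 matrices given by Φ(X) = E₁XE₁† + E₂XE₂† with E₁ = Diag(1, 0, 1/√2, 1/√2) and E₂ = Diag(0, 1, 1/√2, −i/√2). Then Φ is a unital quantum channel (indeed a Schur channel) and the span of {E₁, E₂} contains no unitary matrix. -/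
open Matrix
open scoped Matrix ComplexOrder

noncomputable section

/-- The first Kraus operator `E₁ = Diag(1, 0, 1/√2, 1/√2)`. -/
def E₁ : Matrix (Fin 4) (Fin 4) ℂ :=
  Matrix.diagonal ![1, 0, ((Real.sqrt 2 : ℂ))⁻¹, ((Real.sqrt 2 : ℂ))⁻¹]

/-- The second Kraus operator `E₂ = Diag(0, 1, 1/√2, -i/√2)`. -/
def E₂ : Matrix (Fin 4) (Fin 4) ℂ :=
  Matrix.diagonal ![0, 1, ((Real.sqrt 2 : ℂ))⁻¹, -Complex.I / (Real.sqrt 2 : ℂ)]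

lemma hs2 : ((Real.sqrt 2 : ℂ)) * ((Real.sqrt 2 : ℂ)) = 2 := by
  rw [← Complex.ofReal_mul, Real.mul_self_sqrt (by norm_num)]; norm_num

lemma h2 : ((Real.sqrt 2 : ℂ))⁻¹ * ((Real.sqrt 2 : ℂ))⁻¹ = 2⁻¹ := by
  rw [← mul_inv, hs2]

lemma hstar : star ((Real.sqrt 2 : ℂ))⁻¹ = ((Real.sqrt 2 : ℂ))⁻¹ := by
  simp [Complex.conj_ofReal]

/-- Row matrix whose rows are the conjugated diagonal vectors of `E₁`, `E₂`. -/
def Arows : Matrix (Fin 2) (Fin 4) ℂ :=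
  !![1, 0, ((Real.sqrt 2 : ℂ))⁻¹, ((Real.sqrt 2 : ℂ))⁻¹;
     0, 1, ((Real.sqrt 2 : ℂ))⁻¹, Complex.I / (Real.sqrt 2 : ℂ)]

/-- `Φ(X) = E₁XE₁ᴴ + E₂XE₂ᴴ` is a unital quantum channel (indeed a
Schur channel), and the span of `{E₁, E₂}` contains no unitary matrix. -/
theorem example_channel_no_unitary_in_kraus_space :
    (E₁ᴴ * E₁ + E₂ᴴ * E₂ = 1) ∧
    (E₁ * E₁ᴴ + E₂ * E₂ᴴ = 1) ∧
    (∃ S : Matrix (Fin 4) (Fin 4) ℂ, S.PosSemidef ∧ (∀ k, S k k = 1) ∧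
      ∀ X, E₁ * X * E₁ᴴ + E₂ * X * E₂ᴴ = S.hadamard X) ∧
    (∀ L ∈ Submodule.span ℂ ({E₁, E₂} : Set (Matrix (Fin 4) (Fin 4) ℂ)),
      L ∉ Matrix.unitaryGroup (Fin 4) ℂ) := by
  refine ⟨?_, ?_, ?_, ?_⟩
  · ext i j
    fin_cases i <;> fin_cases j <;>
      simp [E₁, E₂, Matrix.diagonal_conjTranspose, Matrix.diagonal_mul_diagonal,
        Matrix.diagonal_apply, Matrix.one_apply, hstar, h2, Pi.star_apply] <;>
      norm_num <;>
      rw [div_mul_div_comm, hs2] <;> norm_num [Complex.I_mul_I]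
  · ext i j
    fin_cases i <;> fin_cases j <;>
      simp [E₁, E₂, Matrix.diagonal_conjTranspose, Matrix.diagonal_mul_diagonal,
        Matrix.diagonal_apply, Matrix.one_apply, hstar, h2, Pi.star_apply] <;>
      norm_num <;>
      rw [div_mul_div_comm, hs2] <;> norm_num [Complex.I_mul_I]
  · refine ⟨Arowsᴴ * Arows, Matrix.posSemidef_conjTranspose_mul_self Arows, ?_, ?_⟩
    · intro k
      fin_cases k <;>
        simp [Arows, Matrix.mul_apply, Fin.sum_univ_two, Matrix.conjTranspose_apply,
          hstar, h2, Complex.conj_ofReal] <;>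
        norm_num [div_mul_div_comm, hs2, Complex.I_mul_I] <;>
        norm_num [Complex.I_mul_I] <;> ring_nf <;> norm_num
    · intro X
      ext i j
      have key : (Arowsᴴ * Arows) i j =
          (![1, 0, ((Real.sqrt 2 : ℂ))⁻¹, ((Real.sqrt 2 : ℂ))⁻¹] : Fin 4 → ℂ) i *
            star ((![1, 0, ((Real.sqrt 2 : ℂ))⁻¹, ((Real.sqrt 2 : ℂ))⁻¹] : Fin 4 → ℂ) j) +
          (![0, 1, ((Real.sqrt 2 : ℂ))⁻¹, -Complex.I / (Real.sqrt 2 : ℂ)] : Fin 4 → ℂ) i *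
            star ((![0, 1, ((Real.sqrt 2 : ℂ))⁻¹, -Complex.I / (Real.sqrt 2 : ℂ)] : Fin 4 → ℂ) j) := by
        fin_cases i <;> fin_cases j <;>
          simp [Arows, Matrix.mul_apply, Fin.sum_univ_two, Matrix.conjTranspose_apply,
            hstar, Complex.conj_ofReal, map_div₀] <;> ring
      simp only [E₁, E₂, Matrix.add_apply, Matrix.diagonal_conjTranspose,
        Matrix.diagonal_mul, Matrix.mul_diagonal, Matrix.hadamard_apply, Pi.star_apply, key]
      ring
  · intro L hL hU
    rw [Submodule.mem_span_pair] at hL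
    obtain ⟨a, b, rfl⟩ := hL
    have hst : star (a • E₁ + b • E₂) * (a • E₁ + b • E₂) = 1 :=
      Matrix.mem_unitaryGroup_iff'.mp hU
    have entry : ∀ i : Fin 4, (star (a • E₁ + b • E₂) * (a • E₁ + b • E₂)) i i
        = (1 : Matrix (Fin 4) (Fin 4) ℂ) i i := by
      intro i; rw [hst]
    have e0 := entry 0
    have e1 := entry 1
    have e2 := entry 2
    have e3 := entry 3
    simp [E₁, E₂, Matrix.mul_apply, Fin.sum_univ_four, Matrix.star_apply,
      Matrix.diagonal_apply, Matrix.one_apply, Complex.conj_ofReal, map_div₀] at e0 e1 e2 e3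
    have hs : ((Real.sqrt 2 : ℂ)) ≠ 0 :=
      Complex.ofReal_ne_zero.mpr (by positivity)
    field_simp [hs] at e2 e3
    rw [sq, hs2] at e2 e3
    simp only [Complex.ext_iff, Complex.mul_re, Complex.mul_im, Complex.add_re, Complex.add_im,
      Complex.conj_re, Complex.conj_im, Complex.one_re, Complex.one_im, Complex.I_re,
      Complex.I_im, Complex.neg_re, Complex.neg_im] at e0 e1 e2 e3
    obtain ⟨e0, -⟩ := e0
    obtain ⟨e1, -⟩ := e1
    obtain ⟨e2a, -⟩ := e2
    obtain ⟨e3a, -⟩ := e3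
    norm_num at e2a e3a
    have hp : a.re * b.re + a.im * b.im = 0 := by linear_combination (e2a - e0 - e1) / 2
    have hq : a.re * b.im - a.im * b.re = 0 := by linear_combination (e3a - e0 - e1) / 2
    have : (1 : ℝ) = 0 := by nlinarith [hp, hq, e0, e1]
    norm_num at this
end
end

section
/- Let K_d^+ be the least constant K such that every positive Schur multiplier of norm at most 1 on d×d matrices lies in K·Conv(𝔻_d^+), and let K_{d,1}^+ be the least constant K such that every Schur channel lies in K·Conv(𝔻_d^+). Then K_{d,1}^+ = K_d^+ for all d. -/
open Matrix
open scoped Matrix ComplexOrder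

noncomputable section

/-- `𝕊_d⁺`: positive Schur multipliers of norm at most one, i.e. matrices `S` that are
Gram matrices of vectors in the unit ball; equivalently `S` positive semidefinite with
diagonal entries at most `1`. -/
def posSchurBall (d : ℕ) : Set (Matrix (Fin d) (Fin d) ℂ) :=
  {S | S.PosSemidef ∧ ∀ k, (S k k).re ≤ 1}

/-- Schur channels: `S` positive semidefinite with unit diagonal. -/
def schurChannels (d : ℕ) : Set (Matrix (Fin d) (Fin d) ℂ) :=
  {S | S.PosSemidef ∧ ∀ k, S k k = 1}

/-- `𝔻_d⁺`: rank-one Schur multipliers `s_{kj} = αₖ* αⱼ` with `|αₖ| ≤ 1`. -/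
def Dplus (d : ℕ) : Set (Matrix (Fin d) (Fin d) ℂ) :=
  {S | ∃ α : Fin d → ℂ, (∀ k, ‖α k‖ ≤ 1) ∧
    S = Matrix.of fun k j => star (α k) * α j}

lemma hadamard_mem_convexHull {d : ℕ} {C T : Matrix (Fin d) (Fin d) ℂ}
    (hC : C ∈ Dplus d) (hT : T ∈ convexHull ℝ (Dplus d)) :
    (Matrix.of fun k j => C k j * T k j) ∈ convexHull ℝ (Dplus d) := by
  have hconv : Convex ℝ {T : Matrix (Fin d) (Fin d) ℂ |
      (Matrix.of fun k j => C k j * T k j) ∈ convexHull ℝ (Dplus d)} := by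
    intro x hx y hy a b ha hb hab
    have : (Matrix.of fun k j => C k j * (a • x + b • y) k j)
        = a • (Matrix.of fun k j => C k j * x k j)
          + b • (Matrix.of fun k j => C k j * y k j) := by
      ext k j
      simp [Matrix.add_apply, Matrix.smul_apply]
      ring
    rw [Set.mem_setOf_eq, this]
    exact (convex_convexHull ℝ (Dplus d)) hx hy ha hb hab
  have hsub : Dplus d ⊆ {T : Matrix (Fin d) (Fin d) ℂ |
      (Matrix.of fun k j => C k j * T k j) ∈ convexHull ℝ (Dplus d)} := by
    rintro T' ⟨β, hβ, rfl⟩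
    obtain ⟨α, hα, rfl⟩ := hC
    refine subset_convexHull ℝ _ ⟨fun k => α k * β k, fun k => ?_, ?_⟩
    · calc ‖α k * β k‖ = ‖α k‖ * ‖β k‖ := norm_mul _ _
        _ ≤ 1 * 1 := mul_le_mul (hα k) (hβ k) (norm_nonneg _) zero_le_one
        _ = 1 := one_mul 1
    · ext k j
      simp
      ring
  exact convexHull_min hsub hconv hT

/-- In a psd matrix, a zero diagonal entry forces the whole column to vanish. -/
lemma col_eq_zero_of_diag_eq_zero {d : ℕ} {S : Matrix (Fin d) (Fin d) ℂ}
    (hS : S.PosSemidef) {k : Fin d} (h : S k k = 0) (j : Fin d) : S j k = 0 := by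
  have h1 : star (Pi.single k 1 : Fin d → ℂ) ⬝ᵥ S *ᵥ (Pi.single k 1) = 0 := by
    simp [Matrix.mulVec_single, dotProduct, Pi.single_apply, h]
  have h2 := (hS.dotProduct_mulVec_zero_iff (Pi.single k 1)).mp h1
  have := congrFun h2 j
  simpa [Matrix.mulVec_single] using this

/-- the least constant `K` with `𝕊_d⁺ ⊆ K · Conv(𝔻_d⁺)` equals the
least constant `K` with `{Schur channels} ⊆ K · Conv(𝔻_d⁺)`, i.e. `K_d⁺ = K_{d,1}⁺`. -/
theorem Kd_plus_eq_Kd_one_plus (d : ℕ) :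
    sInf {K : ℝ | 0 ≤ K ∧ ∀ S ∈ posSchurBall d,
        ∃ T ∈ convexHull ℝ (Dplus d), S = K • T} =
      sInf {K : ℝ | 0 ≤ K ∧ ∀ S ∈ schurChannels d,
        ∃ T ∈ convexHull ℝ (Dplus d), S = K • T} := by
  congr 1
  ext K
  simp only [Set.mem_setOf_eq]
  constructor
  · rintro ⟨hK0, hK⟩
    refine ⟨hK0, fun S hS => hK S ⟨hS.1, fun k => by rw [hS.2 k]; norm_num⟩⟩
  · rintro ⟨hK0, hK⟩
    refine ⟨hK0, fun S hS => ?_⟩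
    obtain ⟨hpsd, hdiag⟩ := hS
    -- diagonal entries are real and nonnegative
    have hreal : ∀ k, S k k = ((S k k).re : ℂ) := fun k => by
      have := hpsd.isHermitian.apply k k
      exact (Complex.conj_eq_iff_re.mp this).symm
    have hnn : ∀ k, 0 ≤ (S k k).re := fun k => by
      have := hpsd.dotProduct_mulVec_nonneg (Pi.single k 1)
      have h1 : star (Pi.single k 1 : Fin d → ℂ) ⬝ᵥ S *ᵥ (Pi.single k 1) = S k k := by
        simp [Matrix.mulVec_single, dotProduct, Pi.single_apply]
      rw [h1] at this
      exact (Complex.le_def.mp this).1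
    set c : Fin d → ℝ := fun k => Real.sqrt (S k k).re with hc
    have hc1 : ∀ k, c k ≤ 1 := fun k => by
      rw [hc]
      calc Real.sqrt (S k k).re ≤ Real.sqrt 1 := Real.sqrt_le_sqrt (hdiag k)
        _ = 1 := Real.sqrt_one
    have hcnn : ∀ k, 0 ≤ c k := fun k => Real.sqrt_nonneg _
    have hcsq : ∀ k, (c k) ^ 2 = (S k k).re := fun k => Real.sq_sqrt (hnn k)
    -- the scaling vector
    set e : Fin d → ℝ := fun k => if (S k k).re = 0 then 1 else (c k)⁻¹ with he
    -- the Schur channel extension of S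
    set S' : Matrix (Fin d) (Fin d) ℂ :=
      Matrix.diagonal (fun k => (e k : ℂ)) * S * Matrix.diagonal (fun k => (e k : ℂ))
        + Matrix.diagonal (fun k => if (S k k).re = 0 then (1 : ℂ) else 0) with hS'
    have hS'app : ∀ k j, S' k j = (e k : ℂ) * S k j * (e j : ℂ)
        + if k = j then (if (S k k).re = 0 then (1 : ℂ) else 0) else 0 := by
      intro k j
      rw [hS', Matrix.add_apply, Matrix.mul_diagonal, Matrix.diagonal_mul,
        Matrix.diagonal_apply]
    have hzero : ∀ k j, S k k = 0 → S k j = 0 := by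
      intro k j h
      have h1 := col_eq_zero_of_diag_eq_zero hpsd h j
      have h2 : S k j = star (S j k) := (hpsd.isHermitian.apply k j).symm
      rw [h2, h1, star_zero]
    -- S' is a Schur channel
    have hS'chan : S' ∈ schurChannels d := by
      constructor
      · apply Matrix.PosSemidef.add
        · have := hpsd.mul_mul_conjTranspose_same (Matrix.diagonal (fun k => (e k : ℂ)))
          have hH : (Matrix.diagonal (fun k => (e k : ℂ)))ᴴ
              = Matrix.diagonal (fun k => (e k : ℂ)) := by
            ext i j
            by_cases hij : i = j
            · simp [Matrix.conjTranspose_apply, Matrix.diagonal_apply, hij,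
                Complex.conj_ofReal]
            · simp [Matrix.conjTranspose_apply, Matrix.diagonal_apply, hij,
                Ne.symm hij]
          rwa [hH] at this
        · refine Matrix.PosSemidef.diagonal fun k => ?_
          by_cases h : (S k k).re = 0 <;> simp [h]
      · intro k
        rw [hS'app k k]
        by_cases h : (S k k).re = 0
        · have : S k k = 0 := by
            rw [hreal k, h]; simp
          simp [h, this]
        · have hckpos : c k ≠ 0 :=
            Real.sqrt_ne_zero'.mpr ((hnn k).lt_of_ne (Ne.symm h))
          simp only [he, h, if_false, eq_self_iff_true, if_true, add_zero]
          rw [hreal k, ← hcsq k]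
          push_cast
          field_simp
          all_goals ring
    obtain ⟨T, hT, hTeq⟩ := hK S' hS'chan
    -- recover S by Schur-multiplying with the rank-one matrix of the c's
    refine ⟨Matrix.of fun k j => ((c k : ℂ) * (c j : ℂ)) * T k j, ?_, ?_⟩
    · have hCmem : (Matrix.of fun k j => star ((fun k => (c k : ℂ)) k) * (fun k => (c k : ℂ)) j)
          ∈ Dplus d := ⟨fun k => (c k : ℂ), fun k => by
            simpa [Complex.norm_real, abs_of_nonneg (hcnn k)] using hc1 k, rfl⟩
      have := hadamard_mem_convexHull hCmem hT
      convert this using 2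
      ext k j
      simp [Complex.star_def, Complex.conj_ofReal]
    · -- entrywise identity S k j = c k * c j * S' k j and S' = K • T
      ext k j
      have hent : S k j = (c k : ℂ) * (c j : ℂ) * S' k j := by
        rw [hS'app k j]
        by_cases hk : (S k k).re = 0
        · have hSk : S k k = 0 := by rw [hreal k, hk]; simp
          have : S k j = 0 := hzero k j hSk
          rw [this, hc]
          simp [hk]
        · by_cases hj : (S j j).re = 0
          · have hSj : S j j = 0 := by rw [hreal j, hj]; simp
            have h1 : S j k = 0 := hzero j k hSj
            have hSkj : S k j = 0 := by
              have h2 : S k j = star (S j k) := (hpsd.isHermitian.apply k j).symm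
              rw [h2, h1, star_zero]
            rw [hSkj, hc]
            have hkj : k ≠ j := by
              rintro rfl; exact hk hj
            simp [hj, hkj]
          · have hck : c k ≠ 0 :=
              Real.sqrt_ne_zero'.mpr ((hnn k).lt_of_ne (Ne.symm hk))
            have hcj : c j ≠ 0 :=
              Real.sqrt_ne_zero'.mpr ((hnn j).lt_of_ne (Ne.symm hj))
            have hkj : (if k = j then (if (S k k).re = 0 then (1:ℂ) else 0) else 0) = 0 := by
              by_cases h : k = j <;> simp [h, hk, hj]
            rw [hkj, add_zero, he]
            simp only [hk, hj, if_false]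
            push_cast
            field_simp
            all_goals ring
      rw [hent, hTeq]
      simp only [Matrix.smul_apply, Matrix.of_apply, Complex.real_smul]
      ring
end
end
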